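/- Let g be of type A_n with adapted ι satisfying both ι^{(k)} > ι^{(k+1)} and ι^{(k)} > ι^{(k-1)} for some 1 < k < n. Define Tab_{A,ι,k}[λ] = { [j₁,...,j_k]^A_{−P(k−1)} + ⟨λ,h_k⟩ : 1 ≤ j₁ < ⋯ < j_k ≤ n+1, j_k > k }. Then Tab_{A,ι,k}[λ] ∪ {0} is closed under all operators Ŝ_{m,j} (m ≥ 1, j ∈ I), and every element of Tab_{A,ι,k}[λ] is obtained from λ^{(k)} = [1,...,k−1,k+1]^A_{−P(k−1)} + ⟨λ,h_k⟩ by applying a finite sequence of operators Ŝ_{m,j}; hence Ξ_{ι,k}[λ] = Tab_{A,ι,k}[λ] ∪ {0}. -/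

import Mathlib

/-! Combinatorics of an adapted sequence `ι` for a classical Lie algebra, and the
column-tableau linear forms of Kanakubo–Nakashima in re-indexed coordinates `x_{m,j}`
(the coordinate for the `m`-th occurrence of the index `j` in `ι`). -/

noncomputable section

/-- First position `m ≥ 1` with `ι m ∈ {i, j}`. -/
def firstBoth (ι : ℕ → ℕ) (i j : ℕ) : ℕ := sInf {m | 1 ≤ m ∧ (ι m = i ∨ ι m = j)}

/-- `p_{i,j} = 1` if `i` occurs before `j` in `ι`, and `0` otherwise. -/
def pOf (ι : ℕ → ℕ) (i j : ℕ) : ℕ := if ι (firstBoth ι i j) = i then 1 else 0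

/-- `ι⁽ⁱ⁾`, the first position of `ι` at which `i` occurs. -/
def firstOcc (ι : ℕ → ℕ) (i : ℕ) : ℕ := sInf {m | 1 ≤ m ∧ ι m = i}

/-- `P(k) = p_{2,1} + p_{3,2} + ⋯ + p_{k,k-1}` (so `P 0 = P 1 = 0`). -/
def Pof (ι : ℕ → ℕ) (k : ℕ) : ℕ := ∑ i ∈ Finset.Icc 2 k, pOf ι i (i - 1)

/-- The condition that every index `1,…,n` occurs infinitely often in `ι` and
consecutive entries of `ι` differ. -/
def SeqCond (n : ℕ) (ι : ℕ → ℕ) : Prop :=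
  (∀ m, 1 ≤ m → 1 ≤ ι m ∧ ι m ≤ n) ∧
  (∀ m, 1 ≤ m → ι m ≠ ι (m + 1)) ∧
  (∀ i, 1 ≤ i → i ≤ n → ∀ N : ℕ, ∃ m, N < m ∧ ι m = i)

/-- `ι` is adapted to the type `A_n` Cartan matrix: for adjacent indices `i, j`, any two
consecutive members of the subsequence of `ι` consisting of `i`'s and `j`'s differ. -/
def AdaptedA (n : ℕ) (ι : ℕ → ℕ) : Prop :=
  ∀ i j : ℕ, 1 ≤ i → i ≤ n → 1 ≤ j → j ≤ n → (i = j + 1 ∨ j = i + 1) →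
    ∀ m m' : ℕ, 1 ≤ m → m < m' → (ι m = i ∨ ι m = j) → (ι m' = i ∨ ι m' = j) →
      (∀ r, m < r → r < m' → ι r ≠ i ∧ ι r ≠ j) → ι m ≠ ι m'

/-- Linear forms on `ℚ^∞`, presented by their coefficients in the re-indexed
coordinates `x_{m,j}`. -/
abbrev LinF : Type := ℤ × ℕ → ℚ

/-- The coordinate functional `x_{m,j}` (zero when `m ≤ 0`, `j = 0` or `j > n`). -/
def XT (n : ℕ) (m : ℤ) (j : ℕ) : LinF :=
  fun q => if q = (m, j) ∧ 1 ≤ m ∧ 1 ≤ j ∧ j ≤ n then 1 else 0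

/-- The box `⌈j⌉^A_s = x_{s+P(j),j} − x_{s+P(j−1)+1,j−1}` of type `A_n`. -/
def boxA (n : ℕ) (ι : ℕ → ℕ) (j : ℕ) (s : ℤ) : LinF :=
  XT n (s + (Pof ι j : ℤ)) j - XT n (s + (Pof ι (j - 1) : ℤ) + 1) (j - 1)

/-- The column tableau `[j₁,…,j_k]^A_s = Σ_{i=1}^k ⌈j_i⌉^A_{s+k−i}` (here `j` is
`0`-indexed: `j ⟨0⟩ = j₁, …`). -/
def tabA (n : ℕ) (ι : ℕ → ℕ) {k : ℕ} (j : Fin k → ℕ) (s : ℤ) : LinF :=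
  ∑ i : Fin k, boxA n ι (j i) (s + (k : ℤ) - 1 - ((i : ℕ) : ℤ))

/-- The Nakashima–Zelevinsky form `β_{m,j}` in re-indexed coordinates, for `ι` adapted
to a type `A` Cartan matrix:
`β_{m,j} = x_{m,j} + x_{m+1,j} − x_{m+p_{j−1,j},j−1} − x_{m+p_{j+1,j},j+1}`. -/
def betaA (n : ℕ) (ι : ℕ → ℕ) (m : ℤ) (j : ℕ) : LinF :=
  XT n m j + XT n (m + 1) j - XT n (m + (pOf ι (j - 1) j : ℤ)) (j - 1)
    - XT n (m + (pOf ι (j + 1) j : ℤ)) (j + 1)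

/-- Affine-linear forms: a constant term together with a linear form. -/
abbrev AffF : Type := ℚ × LinF

/-- The form `β⁽⁻⁾_{m,j}` in re-indexed coordinates: `β_{m−1,j}` when `m ≥ 2`, and the
`λ`-dependent form with constant term `−⟨h_j, λ⟩` when `m = 1`. -/
def betaMA (n : ℕ) (ι : ℕ → ℕ) (lam : ℕ → ℤ) (m : ℤ) (j : ℕ) : AffF :=
  ((if m = 1 then -(lam j : ℚ) else 0), betaA n ι (m - 1) j)

/-- The operator `Ŝ_{m,j}` of the polyhedral realization of `B(λ)` in re-indexed
coordinates. -/
def ShatA (n : ℕ) (ι : ℕ → ℕ) (lam : ℕ → ℤ) (m : ℤ) (j : ℕ) (φ : AffF) : AffF :=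
  if 0 < φ.2 (m, j) then φ - φ.2 (m, j) • (((0 : ℚ), betaA n ι m j) : AffF)
  else φ - φ.2 (m, j) • betaMA n ι lam m j

end

noncomputable section

/-- The set `Tab_{A,ι,k}[λ] = {[j₁,…,j_k]^A_{−P(k−1)} + ⟨λ,h_k⟩ :
1 ≤ j₁ < ⋯ < j_k ≤ n+1, j_k > k}` (columns are `0`-indexed, `a ↦ j_{a+1}`). -/
def TabAk (n : ℕ) (ι : ℕ → ℕ) (lam : ℕ → ℤ) (k : ℕ) : Set AffF :=
  {φ | ∃ j : Fin k → ℕ, StrictMono j ∧ (∀ i, 1 ≤ j i ∧ j i ≤ n + 1) ∧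
    (∀ i : Fin k, (i : ℕ) = k - 1 → k < j i) ∧
    φ = ((lam k : ℚ), tabA n ι j (-(Pof ι (k - 1) : ℤ)))}

/-- `λ⁽ᵏ⁾ = [1,…,k−1,k+1]^A_{−P(k−1)} + ⟨λ,h_k⟩`. -/
def lamTabA (n : ℕ) (ι : ℕ → ℕ) (lam : ℕ → ℤ) (k : ℕ) : AffF :=
  ((lam k : ℚ),
    tabA n ι (fun i : Fin k => if (i : ℕ) < k - 1 then (i : ℕ) + 1 else k + 1)
      (-(Pof ι (k - 1) : ℤ)))

/-- `Ξ_{ι,k}[λ]`: all functions obtained from `λ⁽ᵏ⁾` by finite sequences of the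
operators `Ŝ_{m,j}` (`m ≥ 1`, `j ∈ I`). -/
def XiTabk (n : ℕ) (ι : ℕ → ℕ) (lam : ℕ → ℤ) (k : ℕ) : Set AffF :=
  {φ | ∃ L : List (ℤ × ℕ), (∀ q ∈ L, 1 ≤ q.1 ∧ 1 ≤ q.2 ∧ q.2 ≤ n) ∧
    φ = L.foldr (fun q ψ => ShatA n ι lam q.1 q.2 ψ) (lamTabA n ι lam k)}

end
/-! ### Auxiliary lemmas -/

section AuxBasic

variable (n : ℕ) (ι : ℕ → ℕ)

lemma XT_row_nonpos {m : ℤ} (h : ¬ 1 ≤ m) (j : ℕ) : XT n m j = 0 := by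
  funext q; rw [XT]; exact if_neg (by tauto)

lemma XT_col_zero (m : ℤ) : XT n m 0 = 0 := by
  funext q; rw [XT]; exact if_neg (by rintro ⟨-, -, h, -⟩; omega)

lemma occ_nonempty (hseq : SeqCond n ι) {i : ℕ} (hi1 : 1 ≤ i) (hin : i ≤ n) :
    {m | 1 ≤ m ∧ ι m = i}.Nonempty := by
  obtain ⟨m, hm, he⟩ := hseq.2.2 i hi1 hin 0
  exact ⟨m, by omega, he⟩

lemma firstOcc_spec (hseq : SeqCond n ι) {i : ℕ} (hi1 : 1 ≤ i) (hin : i ≤ n) :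
    1 ≤ firstOcc ι i ∧ ι (firstOcc ι i) = i :=
  Nat.sInf_mem (occ_nonempty n ι hseq hi1 hin)

lemma firstBoth_le {i j x : ℕ} (hx : 1 ≤ x) (h : ι x = i ∨ ι x = j) :
    firstBoth ι i j ≤ x := Nat.sInf_le ⟨hx, h⟩

lemma firstBoth_spec (hseq : SeqCond n ι) {i : ℕ} (hi1 : 1 ≤ i) (hin : i ≤ n) (j : ℕ) :
    1 ≤ firstBoth ι i j ∧ (ι (firstBoth ι i j) = i ∨ ι (firstBoth ι i j) = j) := by
  have hne : {m | 1 ≤ m ∧ (ι m = i ∨ ι m = j)}.Nonempty :=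
    ⟨firstOcc ι i, (firstOcc_spec n ι hseq hi1 hin).1,
      Or.inl (firstOcc_spec n ι hseq hi1 hin).2⟩
  exact Nat.sInf_mem hne

lemma firstBoth_comm (i j : ℕ) : firstBoth ι i j = firstBoth ι j i := by
  unfold firstBoth; congr 1; ext m; constructor <;> rintro ⟨h1, h2⟩ <;> exact ⟨h1, h2.symm⟩

lemma pOf_eq_one_of_lt (hseq : SeqCond n ι) {i j : ℕ} (hi1 : 1 ≤ i) (hin : i ≤ n)
    (hj1 : 1 ≤ j) (hjn : j ≤ n) (h : firstOcc ι i < firstOcc ι j) : pOf ι i j = 1 := by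
  rw [pOf, if_pos]
  rcases (firstBoth_spec n ι hseq hi1 hin j).2 with h' | h'
  · exact h'
  · exfalso
    have h1 : firstOcc ι j ≤ firstBoth ι i j :=
      Nat.sInf_le ⟨(firstBoth_spec n ι hseq hi1 hin j).1, h'⟩
    have h2 : firstBoth ι i j ≤ firstOcc ι i :=
      firstBoth_le ι (firstOcc_spec n ι hseq hi1 hin).1 (Or.inl (firstOcc_spec n ι hseq hi1 hin).2)
    omega

lemma pOf_eq_zero_of_lt (hseq : SeqCond n ι) {i j : ℕ} (hi1 : 1 ≤ i) (hin : i ≤ n)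
    (hj1 : 1 ≤ j) (hjn : j ≤ n) (h : firstOcc ι j < firstOcc ι i) : pOf ι i j = 0 := by
  rw [pOf, if_neg]
  intro h'
  have h1 : firstOcc ι i ≤ firstBoth ι i j :=
    Nat.sInf_le ⟨(firstBoth_spec n ι hseq hi1 hin j).1, h'⟩
  have h2 : firstBoth ι i j ≤ firstOcc ι j :=
    firstBoth_le ι (firstOcc_spec n ι hseq hj1 hjn).1 (Or.inr (firstOcc_spec n ι hseq hj1 hjn).2)
  omega

lemma pOf_add_comm (hseq : SeqCond n ι) {i j : ℕ} (hi1 : 1 ≤ i) (hin : i ≤ n)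
    (hj1 : 1 ≤ j) (hjn : j ≤ n) (hij : i ≠ j) : pOf ι i j + pOf ι j i = 1 := by
  rw [pOf, pOf, firstBoth_comm ι j i]
  rcases (firstBoth_spec n ι hseq hi1 hin j).2 with h' | h'
  · rw [if_pos h', if_neg (by rw [h']; exact hij)]
  · rw [if_neg (by rw [h']; exact fun h => hij h.symm), if_pos h']

lemma pOf_le_one (i j : ℕ) : pOf ι i j ≤ 1 := by
  rw [pOf]; split <;> omega

lemma Pof_succ {j : ℕ} (hj : 1 ≤ j) : Pof ι (j + 1) = Pof ι j + pOf ι (j + 1) j := by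
  rw [Pof, Pof, Finset.sum_Icc_succ_top (by omega : 2 ≤ j + 1)]
  simp

lemma Pof_mono {a b : ℕ} (h : a ≤ b) : Pof ι a ≤ Pof ι b := by
  apply Finset.sum_le_sum_of_subset
  exact Finset.Icc_subset_Icc_right h

lemma Pof_sub_le {a b : ℕ} (ha : 1 ≤ a) (h : a ≤ b) : Pof ι b + a ≤ Pof ι a + b := by
  induction b, h using Nat.le_induction with
  | base => omega
  | succ b hb ih =>
      rw [Pof_succ ι (by omega)]
      have := pOf_le_one ι (b+1) b
      omega

end AuxBasic
section AuxTab

variable (n : ℕ) (ι : ℕ → ℕ)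

lemma boxbump (hseq : SeqCond n ι) {c : ℕ} (hc1 : 1 ≤ c) (hcn : c ≤ n) (t : ℤ) :
    boxA n ι (c + 1) t = boxA n ι c t - betaA n ι (t + (Pof ι c : ℤ)) c := by
  have hP1 : (Pof ι (c + 1) : ℤ) = Pof ι c + pOf ι (c + 1) c := by
    rw [Pof_succ ι hc1]; push_cast; ring
  have e1 : t + (Pof ι c : ℤ) + (pOf ι (c + 1) c : ℤ) = t + (Pof ι (c + 1) : ℤ) := by
    rw [hP1]; ring
  rw [boxA, boxA, betaA, Nat.add_sub_cancel, e1]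
  rcases Nat.eq_or_lt_of_le hc1 with h1 | h2
  · obtain rfl : c = 1 := h1.symm
    norm_num
    rw [XT_col_zero, XT_col_zero]
    abel
  · have hsum : pOf ι c (c - 1) + pOf ι (c - 1) c = 1 :=
      pOf_add_comm n ι hseq (by omega) hcn (by omega) (by omega) (by omega)
    have hP0 : Pof ι c = Pof ι (c - 1) + pOf ι c (c - 1) := by
      have h := Pof_succ ι (j := c - 1) (by omega)
      rw [show c - 1 + 1 = c by omega] at h
      exact h
    have e2 : t + (Pof ι c : ℤ) + (pOf ι (c - 1) c : ℤ) = t + (Pof ι (c - 1) : ℤ) + 1 := by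
      have : (Pof ι c : ℤ) = Pof ι (c - 1) + pOf ι c (c - 1) := by exact_mod_cast hP0
      rw [this]
      have : (pOf ι c (c-1) : ℤ) + (pOf ι (c-1) c : ℤ) = 1 := by exact_mod_cast hsum
      linarith
    rw [e2]
    abel

lemma tabbump (hseq : SeqCond n ι) {k : ℕ} (j : Fin k → ℕ) (a : Fin k)
    (hc1 : 1 ≤ j a) (hcn : j a ≤ n) (s : ℤ) :
    tabA n ι (Function.update j a (j a + 1)) s
      = tabA n ι j s
        - betaA n ι (s + (k : ℤ) - 1 - ((a : ℕ) : ℤ) + (Pof ι (j a) : ℤ)) (j a) := by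
  rw [tabA, tabA]
  have hsplit : ∀ i : Fin k, boxA n ι (Function.update j a (j a + 1) i)
      (s + (k : ℤ) - 1 - ((i : ℕ) : ℤ))
      = Function.update (fun i : Fin k => boxA n ι (j i) (s + (k : ℤ) - 1 - ((i : ℕ) : ℤ)))
          a (boxA n ι (j a + 1) (s + (k : ℤ) - 1 - ((a : ℕ) : ℤ))) i := by
    intro i
    by_cases h : i = a
    · subst h; simp
    · simp [Function.update_of_ne h]
  rw [Finset.sum_congr rfl (fun i _ => hsplit i)]
  rw [Finset.sum_update_of_mem (Finset.mem_univ a)]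
  rw [boxbump n ι hseq hc1 hcn]
  rw [Finset.sum_eq_sum_sdiff_singleton_add (Finset.mem_univ a)
    (fun i : Fin k => boxA n ι (j i) (s + (k : ℤ) - 1 - ((i : ℕ) : ℤ)))]
  abel

lemma tabdown (hseq : SeqCond n ι) {k : ℕ} (j : Fin k → ℕ) (b : Fin k) {jj : ℕ}
    (hjb : j b = jj + 1) (hjj : 1 ≤ jj) (hjn : jj ≤ n) (s : ℤ) :
    tabA n ι j s
      = tabA n ι (Function.update j b jj) s
        - betaA n ι (s + (k : ℤ) - 1 - ((b : ℕ) : ℤ) + (Pof ι jj : ℤ)) jj := by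
  have h1 := tabbump n ι hseq (Function.update j b jj) b
    (by rw [Function.update_self]; exact hjj) (by rw [Function.update_self]; exact hjn) s
  rw [Function.update_self, Function.update_idem] at h1
  rw [← hjb, Function.update_eq_self] at h1
  exact h1

lemma tabzero {k : ℕ} (hPk : Pof ι k = Pof ι (k - 1)) :
    tabA n ι (fun i : Fin k => (i : ℕ) + 1) (-(Pof ι (k - 1) : ℤ)) = 0 := by
  set s : ℤ := -(Pof ι (k - 1) : ℤ) with hs
  rw [tabA]
  have key : ∀ i : Fin k, boxA n ι ((i : ℕ) + 1) (s + (k : ℤ) - 1 - ((i : ℕ) : ℤ))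
      = (fun c : ℕ => XT n (s + (k : ℤ) - (c : ℤ) + (Pof ι c : ℤ)) c) ((i : ℕ) + 1)
        - (fun c : ℕ => XT n (s + (k : ℤ) - (c : ℤ) + (Pof ι c : ℤ)) c) (i : ℕ) := by
    intro i
    rw [boxA, Nat.add_sub_cancel]
    congr 2 <;> push_cast <;> ring
  rw [Finset.sum_congr rfl (fun i _ => key i)]
  rw [Fin.sum_univ_eq_sum_range
    (fun v => (fun c : ℕ => XT n (s + (k : ℤ) - (c : ℤ) + (Pof ι c : ℤ)) c) (v + 1)
      - (fun c : ℕ => XT n (s + (k : ℤ) - (c : ℤ) + (Pof ι c : ℤ)) c) v)]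
  rw [Finset.sum_range_sub (fun c : ℕ => XT n (s + (k : ℤ) - (c : ℤ) + (Pof ι c : ℤ)) c)]
  show XT n (s + (k : ℤ) - ((k : ℕ) : ℤ) + (Pof ι k : ℤ)) k
      - XT n (s + (k : ℤ) - ((0 : ℕ) : ℤ) + (Pof ι 0 : ℤ)) 0 = 0
  have hrow : s + (k : ℤ) - ((k : ℕ) : ℤ) + (Pof ι k : ℤ) = 0 := by
    rw [hs, hPk]; ring
  rw [XT_col_zero, hrow, XT_row_nonpos n (by omega)]
  abel

end AuxTab
section AuxCoeff

variable (n : ℕ) (ι : ℕ → ℕ)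

lemma sum_ite_unique {k : ℕ} (P : Fin k → Prop) [DecidablePred P]
    (h : ∀ a b, P a → P b → a = b) :
    (∑ i : Fin k, if P i then (1 : ℚ) else 0) = if ∃ i, P i then 1 else 0 := by
  by_cases he : ∃ i, P i
  · obtain ⟨a, ha⟩ := he
    rw [if_pos ⟨a, ha⟩, Finset.sum_eq_single a]
    · rw [if_pos ha]
    · intro b _ hb
      exact if_neg (fun hPb => hb (h b a hPb ha))
    · intro h'
      exact absurd (Finset.mem_univ a) h'
  · rw [if_neg he]
    exact Finset.sum_eq_zero fun b _ => if_neg (fun h' => he ⟨b, h'⟩)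

lemma XT_apply (p : ℤ) (c : ℕ) (m : ℤ) (jj : ℕ) (hm : 1 ≤ m) (hjj : 1 ≤ jj) (hjn : jj ≤ n) :
    XT n p c (m, jj) = if c = jj ∧ m = p then 1 else 0 := by
  rw [XT]
  by_cases h : c = jj ∧ m = p
  · rw [if_pos h, if_pos ⟨by rw [h.1, h.2], by omega, by omega, by omega⟩]
  · rw [if_neg h, if_neg]
    rintro ⟨heq, -⟩
    rw [Prod.mk.injEq] at heq
    exact h ⟨heq.2.symm, heq.1⟩

lemma coeffA {k : ℕ} (j : Fin k → ℕ) (hinj : Function.Injective j) {m : ℤ} {jj : ℕ}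
    (hm : 1 ≤ m) (hjj : 1 ≤ jj) (hjn : jj ≤ n) (s : ℤ) :
    tabA n ι j s (m, jj)
      = (if ∃ a : Fin k, j a = jj ∧ m = s + (k : ℤ) - 1 - ((a : ℕ) : ℤ) + (Pof ι jj : ℤ)
          then 1 else 0)
        - (if ∃ a : Fin k, j a = jj + 1
              ∧ m = s + (k : ℤ) - 1 - ((a : ℕ) : ℤ) + (Pof ι jj : ℤ) + 1
          then 1 else 0) := by
  rw [tabA, Finset.sum_apply]
  have hterm : ∀ i : Fin k, boxA n ι (j i) (s + (k : ℤ) - 1 - ((i : ℕ) : ℤ)) (m, jj)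
      = (if j i = jj ∧ m = s + (k : ℤ) - 1 - ((i : ℕ) : ℤ) + (Pof ι jj : ℤ) then (1:ℚ) else 0)
        - (if j i = jj + 1 ∧ m = s + (k : ℤ) - 1 - ((i : ℕ) : ℤ) + (Pof ι jj : ℤ) + 1
            then (1:ℚ) else 0) := by
    intro i
    rw [boxA, Pi.sub_apply, XT_apply n _ _ _ _ hm hjj hjn, XT_apply n _ _ _ _ hm hjj hjn]
    congr 1
    · by_cases h : j i = jj
      · rw [h]
      · rw [if_neg (fun hh => h hh.1), if_neg (fun hh => h hh.1)]
    · by_cases h : j i = jj + 1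
      · rw [h, Nat.add_sub_cancel]
        simp only [eq_self_iff_true, true_and]
      · rw [if_neg (by rintro ⟨hh, -⟩; exact h (by omega)),
          if_neg (fun hh => h hh.1)]
  rw [Finset.sum_congr rfl (fun i _ => hterm i), Finset.sum_sub_distrib]
  congr 1
  · rw [sum_ite_unique]
    rintro a b ⟨ha, -⟩ ⟨hb, -⟩
    exact hinj (ha.trans hb.symm)
  · rw [sum_ite_unique]
    rintro a b ⟨ha, -⟩ ⟨hb, -⟩
    exact hinj (ha.trans hb.symm)

end AuxCoeff
section AuxSM

lemma smadd {k : ℕ} {j : Fin k → ℕ} (hsm : StrictMono j) :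
    ∀ (d : ℕ) (a : Fin k) (h : (a : ℕ) + d < k), j a + d ≤ j ⟨(a : ℕ) + d, h⟩ := by
  intro d
  induction d with
  | zero => intro a h; simp
  | succ d ih =>
      intro a h
      have h' : (a : ℕ) + d < k := by omega
      have h1 := ih a h'
      have h2 : j ⟨(a : ℕ) + d, h'⟩ < j ⟨(a : ℕ) + (d + 1), h⟩ :=
        hsm (Fin.mk_lt_mk.mpr (by omega))
      omega

lemma smlb {k : ℕ} {j : Fin k → ℕ} (hsm : StrictMono j) (h0 : ∀ i, 1 ≤ j i) (a : Fin k) :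
    (a : ℕ) + 1 ≤ j a := by
  have hk : 0 < k := a.pos
  have h1 := smadd hsm (a : ℕ) ⟨0, hk⟩ (by simpa using a.isLt)
  have h2 : j ⟨0, hk⟩ + (a : ℕ) ≤ j a :=
    le_trans h1 (le_of_eq (congrArg j (by ext; simp)))
  have h3 := h0 ⟨0, hk⟩
  omega

lemma posrow (n : ℕ) (ι : ℕ → ℕ) {k : ℕ} (hk1 : 1 < k) {j : Fin k → ℕ}
    (hsm : StrictMono j) (hb : ∀ i, 1 ≤ j i ∧ j i ≤ n + 1)
    (hlast : ∀ i : Fin k, (i : ℕ) = k - 1 → k < j i)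
    (hPk1 : Pof ι (k + 1) = Pof ι (k - 1) + 1) (a : Fin k) :
    1 ≤ -(Pof ι (k - 1) : ℤ) + (k : ℤ) - 1 - ((a : ℕ) : ℤ) + (Pof ι (j a) : ℤ) := by
  rcases Nat.lt_or_ge (a : ℕ) (k - 1) with hc | hc
  · have hja := smlb hsm (fun i => (hb i).1) a
    by_cases hja2 : j a ≤ k - 1
    · have hP := Pof_sub_le ι (show 1 ≤ j a by omega) hja2
      omega
    · have hP := Pof_mono ι (show k - 1 ≤ j a by omega)
      omega
  · have ha : (a : ℕ) = k - 1 := by have := a.isLt; omega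
    have hja : k + 1 ≤ j a := hlast a ha
    have hP : Pof ι (k - 1) + 1 ≤ Pof ι (j a) := by
      rw [← hPk1]; exact Pof_mono ι hja
    omega

end AuxSM

section AuxShat

variable (n : ℕ) (ι : ℕ → ℕ) (lam : ℕ → ℤ) (m : ℤ) (jj : ℕ) (φ : AffF)

lemma ShatA_coeff_zero (h : φ.2 (m, jj) = 0) : ShatA n ι lam m jj φ = φ := by
  rw [ShatA, h]
  simp

lemma ShatA_coeff_one (h : φ.2 (m, jj) = 1) :
    ShatA n ι lam m jj φ = (φ.1, φ.2 - betaA n ι m jj) := by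
  rw [ShatA, h, if_pos one_pos, one_smul]
  cases φ
  rw [Prod.mk_sub_mk]
  simp

lemma ShatA_coeff_neg_one (h : φ.2 (m, jj) = -1) :
    ShatA n ι lam m jj φ
      = (φ.1 + (if m = 1 then -(lam jj : ℚ) else 0), φ.2 + betaA n ι (m - 1) jj) := by
  rw [ShatA, h, if_neg (by norm_num), neg_one_smul, sub_neg_eq_add, betaMA]
  cases φ
  rw [Prod.mk_add_mk]

end AuxShat
section MainClosure

variable (n : ℕ) (ι : ℕ → ℕ) (lam : ℕ → ℤ)

lemma closureTab (hseq : SeqCond n ι) (k : ℕ) (hk1 : 1 < k) (hkn : k < n)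
    (hPk : Pof ι k = Pof ι (k - 1)) (hPk1 : Pof ι (k + 1) = Pof ι (k - 1) + 1)
    (φ : AffF) (hφ : φ ∈ TabAk n ι lam k) (m : ℤ) (jj : ℕ)
    (hm : 1 ≤ m) (hjj : 1 ≤ jj) (hjn : jj ≤ n) :
    ShatA n ι lam m jj φ ∈ TabAk n ι lam k ∪ {(((0 : ℚ), (0 : LinF)) : AffF)} := by
  simp only [TabAk, Set.mem_setOf_eq] at hφ
  obtain ⟨j, hsm, hb, hlast, rfl⟩ := hφ
  set s : ℤ := -(Pof ι (k - 1) : ℤ) with hs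
  have hinj := hsm.injective
  have hco := coeffA n ι j hinj hm hjj hjn s
  by_cases hA : ∃ a, j a = jj
  · obtain ⟨a, ha⟩ := hA
    by_cases hB : ∃ b, j b = jj + 1
    · -- both jj and jj+1 occur: coefficient is identically 0
      obtain ⟨b, hbb⟩ := hB
      have hab : (b : ℕ) = (a : ℕ) + 1 := by
        have h1 : a < b := by
          rw [← hsm.lt_iff_lt, ha, hbb]; omega
        by_contra hne
        have h2 : (a : ℕ) + 1 < k := by
          have := b.isLt; have := Fin.lt_def.mp h1; omega
        have h3 : a < (⟨(a : ℕ) + 1, h2⟩ : Fin k) := Fin.lt_def.mpr (by simp)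
        have h4 : (⟨(a : ℕ) + 1, h2⟩ : Fin k) < b :=
          Fin.lt_def.mpr (by have := Fin.lt_def.mp h1; simp; omega)
        have h5 := hsm h3
        have h6 := hsm h4
        rw [ha] at h5; rw [hbb] at h6
        omega
      have hc0 : tabA n ι j s (m, jj) = 0 := by
        rw [hco]
        by_cases hm1 : m = s + (k : ℤ) - 1 - ((a : ℕ) : ℤ) + (Pof ι jj : ℤ)
        · rw [if_pos ⟨a, ha, hm1⟩,
            if_pos ⟨b, hbb, by rw [hm1, hab]; push_cast; ring⟩]
          ring
        · have hn1 : ¬ ∃ a' : Fin k, j a' = jj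
              ∧ m = s + (k : ℤ) - 1 - ((a' : ℕ) : ℤ) + (Pof ι jj : ℤ) := by
            rintro ⟨a', ha1, ha2⟩
            have he : a' = a := hinj (ha1.trans ha.symm)
            rw [he] at ha2
            exact hm1 ha2
          have hn2 : ¬ ∃ b' : Fin k, j b' = jj + 1
              ∧ m = s + (k : ℤ) - 1 - ((b' : ℕ) : ℤ) + (Pof ι jj : ℤ) + 1 := by
            rintro ⟨b', hb1, hb2⟩
            have he : b' = b := hinj (hb1.trans hbb.symm)
            rw [he] at hb2
            exact hm1 (by rw [hb2, hab]; push_cast; ring)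
          rw [if_neg hn1, if_neg hn2]
          ring
      rw [ShatA_coeff_zero n ι lam m jj _ hc0]
      exact Or.inl ⟨j, hsm, hb, hlast, rfl⟩
    · -- jj occurs, jj+1 does not
      by_cases hm1 : m = s + (k : ℤ) - 1 - ((a : ℕ) : ℤ) + (Pof ι jj : ℤ)
      · have hc1 : tabA n ι j s (m, jj) = 1 := by
          rw [hco, if_pos ⟨a, ha, hm1⟩,
            if_neg (by rintro ⟨b, hb1, -⟩; exact hB ⟨b, hb1⟩)]
          ring
        rw [ShatA_coeff_one n ι lam m jj _ hc1]
        left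
        refine ⟨Function.update j a (jj + 1), ?_, ?_, ?_, ?_⟩
        · intro x y hxy
          by_cases hx : x = a
          · by_cases hy : y = a
            · rw [hx, hy] at hxy; exact absurd hxy (lt_irrefl _)
            · rw [hx] at hxy ⊢
              rw [Function.update_self, Function.update_of_ne hy]
              have h5 := hsm hxy; rw [ha] at h5
              have h6 : j y ≠ jj + 1 := fun h => hB ⟨y, h⟩
              omega
          · by_cases hy : y = a
            · rw [hy] at hxy ⊢
              rw [Function.update_of_ne hx, Function.update_self]
              have h5 := hsm hxy; rw [ha] at h5; omega
            · rw [Function.update_of_ne hx, Function.update_of_ne hy]; exact hsm hxy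
        · intro i
          by_cases hi : i = a
          · rw [hi, Function.update_self]
            exact ⟨by omega, by omega⟩
          · rw [Function.update_of_ne hi]; exact hb i
        · intro i hi2
          by_cases hi : i = a
          · rw [hi, Function.update_self]
            have h5 := hlast i hi2
            rw [hi, ha] at h5
            omega
          · rw [Function.update_of_ne hi]; exact hlast i hi2
        · have hbump := tabbump n ι hseq j a (by omega) (by rw [ha]; exact hjn) s
          rw [ha] at hbump
          show ((lam k : ℚ), tabA n ι j s - betaA n ι m jj) = _
          rw [Prod.mk.injEq]
          exact ⟨rfl, by rw [hbump, hm1]⟩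
      · -- wrong row: coefficient 0
        have hc0 : tabA n ι j s (m, jj) = 0 := by
          rw [hco]
          have hn1 : ¬ ∃ a' : Fin k, j a' = jj
              ∧ m = s + (k : ℤ) - 1 - ((a' : ℕ) : ℤ) + (Pof ι jj : ℤ) := by
            rintro ⟨a', ha1, ha2⟩
            have he : a' = a := hinj (ha1.trans ha.symm)
            rw [he] at ha2
            exact hm1 ha2
          rw [if_neg hn1, if_neg (by rintro ⟨b, hb1, -⟩; exact hB ⟨b, hb1⟩)]
          ring
        rw [ShatA_coeff_zero n ι lam m jj _ hc0]
        exact Or.inl ⟨j, hsm, hb, hlast, rfl⟩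
  · by_cases hB : ∃ b, j b = jj + 1
    · obtain ⟨b, hbb⟩ := hB
      by_cases hm1 : m = s + (k : ℤ) - 1 - ((b : ℕ) : ℤ) + (Pof ι jj : ℤ) + 1
      · -- coefficient -1
        have hcN : tabA n ι j s (m, jj) = -1 := by
          rw [hco, if_neg (by rintro ⟨a, ha, -⟩; exact hA ⟨a, ha⟩),
            if_pos ⟨b, hbb, hm1⟩]
          ring
        rw [ShatA_coeff_neg_one n ι lam m jj _ hcN]
        have hdown := tabdown n ι hseq j b hbb hjj hjn s
        have hrow : s + (k : ℤ) - 1 - ((b : ℕ) : ℤ) + (Pof ι jj : ℤ) = m - 1 := by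
          rw [hm1]; ring
        rw [hrow] at hdown
        have hlin : tabA n ι j s + betaA n ι (m - 1) jj
            = tabA n ι (Function.update j b jj) s := by
          rw [hdown]; abel
        by_cases hm2 : m = 1
        · -- forced collapse to zero
          have hbv : (b : ℕ) = k - 1 := by
            by_contra hbv
            have hblt : (b : ℕ) < k - 1 := by have := b.isLt; omega
            have h5 := smlb hsm (fun i => (hb i).1) b
            rcases Nat.lt_or_ge (b : ℕ) jj with h6 | h6
            · have h8 : jj < k - 1 := by
                by_contra h8
                have := Pof_mono ι (show k - 1 ≤ jj by omega)
                omega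
              have h9 := Pof_sub_le ι hjj (show jj ≤ k - 1 by omega)
              omega
            · have hjb : jj = (b : ℕ) := by omega
              have hbk : (b : ℕ) - 1 < k := by omega
              have h7 : (⟨(b : ℕ) - 1, hbk⟩ : Fin k) < b := Fin.lt_def.mpr (by simp; omega)
              have h8 := hsm h7
              have h9 := smlb hsm (fun i => (hb i).1) ⟨(b : ℕ) - 1, hbk⟩
              have h10 : ((⟨(b : ℕ) - 1, hbk⟩ : Fin k) : ℕ) = (b : ℕ) - 1 := rfl
              exact hA ⟨⟨(b : ℕ) - 1, hbk⟩, by omega⟩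
          have hjjk : jj = k := by
            have h5 := hlast b hbv
            by_contra hne
            have h6 : k + 1 ≤ jj := by omega
            have h7 := Pof_mono ι h6
            omega
          have hupd : Function.update j b jj = fun i : Fin k => (i : ℕ) + 1 := by
            funext i
            by_cases hi : i = b
            · rw [hi, Function.update_self]; omega
            · rw [Function.update_of_ne hi]
              have hiv : (i : ℕ) < k - 1 := by
                have := i.isLt
                have : (i : ℕ) ≠ (b : ℕ) := fun h => hi (Fin.ext h)
                omega
              have hik : (i : ℕ) + ((k - 2) - (i : ℕ)) < k := by omega
              have h5 := smadd hsm ((k - 2) - (i : ℕ)) i hik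
              have h7 : (⟨(i : ℕ) + ((k - 2) - (i : ℕ)), hik⟩ : Fin k) < b :=
                Fin.lt_def.mpr (by simp; omega)
              have h8 := hsm h7
              have h9 : j (⟨(i : ℕ) + ((k - 2) - (i : ℕ)), hik⟩ : Fin k) ≠ jj :=
                fun h => hA ⟨_, h⟩
              have h10 := smlb hsm (fun i => (hb i).1) i
              omega
          right
          rw [Set.mem_singleton_iff, Prod.mk.injEq]
          subst hm2
          refine ⟨?_, ?_⟩
          · show (lam k : ℚ) + (if (1 : ℤ) = 1 then -(lam jj : ℚ) else 0) = 0
            rw [if_pos rfl, hjjk]; ring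
          · show tabA n ι j s + betaA n ι (1 - 1) jj = 0
            rw [hlin, hupd, hs, tabzero n ι hPk]
        · -- m ≠ 1 : ordinary down-bump
          left
          refine ⟨Function.update j b jj, ?_, ?_, ?_, ?_⟩
          · intro x y hxy
            by_cases hx : x = b
            · by_cases hy : y = b
              · rw [hx, hy] at hxy; exact absurd hxy (lt_irrefl _)
              · rw [hx] at hxy ⊢
                rw [Function.update_self, Function.update_of_ne hy]
                have h5 := hsm hxy; omega
            · by_cases hy : y = b
              · rw [hy] at hxy ⊢
                rw [Function.update_of_ne hx, Function.update_self]
                have h5 := hsm hxy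
                have h6 : j x ≠ jj := fun h => hA ⟨x, h⟩
                omega
              · rw [Function.update_of_ne hx, Function.update_of_ne hy]; exact hsm hxy
          · intro i
            by_cases hi : i = b
            · rw [hi, Function.update_self]; exact ⟨hjj, by omega⟩
            · rw [Function.update_of_ne hi]; exact hb i
          · intro i hi2
            by_cases hi : i = b
            · rw [hi, Function.update_self]
              have h5 := hlast i hi2
              rw [hi, hbb] at h5
              by_contra hle
              have hjjk : jj = k := by omega
              apply hm2
              rw [hm1, hs, hjjk, hPk]
              have hbv : ((b : ℕ) : ℤ) = (k : ℤ) - 1 := by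
                rw [hi] at hi2
                omega
              rw [hbv]
              ring
            · rw [Function.update_of_ne hi]; exact hlast i hi2
          · show ((lam k : ℚ) + (if m = 1 then -(lam jj : ℚ) else 0),
              tabA n ι j s + betaA n ι (m - 1) jj) = _
            rw [Prod.mk.injEq]
            exact ⟨by rw [if_neg hm2]; ring, hlin⟩
      · -- wrong row : coefficient 0
        have hc0 : tabA n ι j s (m, jj) = 0 := by
          rw [hco, if_neg (by rintro ⟨a, ha, -⟩; exact hA ⟨a, ha⟩), if_neg]
          · ring
          · rintro ⟨b', hb1, hb2⟩
            have he : b' = b := hinj (hb1.trans hbb.symm)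
            rw [he] at hb2
            exact hm1 hb2
        rw [ShatA_coeff_zero n ι lam m jj _ hc0]
        exact Or.inl ⟨j, hsm, hb, hlast, rfl⟩
    · -- neither occurs : coefficient 0
      have hc0 : tabA n ι j s (m, jj) = 0 := by
        rw [hco, if_neg (by rintro ⟨a, ha, -⟩; exact hA ⟨a, ha⟩),
          if_neg (by rintro ⟨b, hb1, -⟩; exact hB ⟨b, hb1⟩)]
        ring
      rw [ShatA_coeff_zero n ι lam m jj _ hc0]
      exact Or.inl ⟨j, hsm, hb, hlast, rfl⟩

end MainClosure
section MainReach

variable (n : ℕ) (ι : ℕ → ℕ) (lam : ℕ → ℤ)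

lemma reachTab (hseq : SeqCond n ι) (k : ℕ) (hk1 : 1 < k) (hkn : k < n)
    (hPk1 : Pof ι (k + 1) = Pof ι (k - 1) + 1) :
    ∀ N (j : Fin k → ℕ), (∑ i, j i) = N → StrictMono j → (∀ i, 1 ≤ j i ∧ j i ≤ n + 1) →
    (∀ i : Fin k, (i : ℕ) = k - 1 → k < j i) →
    ∃ L : List (ℤ × ℕ), (∀ q ∈ L, 1 ≤ q.1 ∧ 1 ≤ q.2 ∧ q.2 ≤ n) ∧
      (((lam k : ℚ), tabA n ι j (-(Pof ι (k - 1) : ℤ))) : AffF)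
        = L.foldr (fun q ψ => ShatA n ι lam q.1 q.2 ψ) (lamTabA n ι lam k) := by
  intro N
  induction N using Nat.strong_induction_on with
  | _ N ih =>
    intro j hN hsm hbd hlast
    by_cases hlam : j = fun i : Fin k => if (i : ℕ) < k - 1 then (i : ℕ) + 1 else k + 1
    · refine ⟨[], by simp, ?_⟩
      rw [hlam]
      rfl
    · have hinj := hsm.injective
      have key : ∀ a : Fin k, 2 ≤ j a →
          StrictMono (Function.update j a (j a - 1)) →
          (∀ i : Fin k, (i : ℕ) = k - 1 → k < Function.update j a (j a - 1) i) →
          ∃ L : List (ℤ × ℕ), (∀ q ∈ L, 1 ≤ q.1 ∧ 1 ≤ q.2 ∧ q.2 ≤ n) ∧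
            (((lam k : ℚ), tabA n ι j (-(Pof ι (k - 1) : ℤ))) : AffF)
              = L.foldr (fun q ψ => ShatA n ι lam q.1 q.2 ψ) (lamTabA n ι lam k) := by
        intro a h2 hsm' hlast'
        set v := j a - 1 with hv
        set j' := Function.update j a v with hj'
        have hja : j a = v + 1 := by omega
        have hj'a : j' a = v := by rw [hj', Function.update_self]
        have hbd' : ∀ i, 1 ≤ j' i ∧ j' i ≤ n + 1 := by
          intro i
          by_cases hi : i = a
          · rw [hi, hj', Function.update_self]
            have := (hbd a).2
            omega
          · rw [hj', Function.update_of_ne hi]; exact hbd i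
        have hsum : ∑ i, j' i + 1 = ∑ i, j i := by
          rw [hj', Finset.sum_update_of_mem (Finset.mem_univ a),
            Finset.sum_eq_sum_sdiff_singleton_add (Finset.mem_univ a) j]
          omega
        obtain ⟨L, hLb, hLe⟩ := ih (∑ i, j' i) (by omega) j' rfl hsm' hbd' hlast'
        set mrow : ℤ := -(Pof ι (k - 1) : ℤ) + (k : ℤ) - 1 - ((a : ℕ) : ℤ) + (Pof ι v : ℤ)
          with hmrow
        have hmpos : 1 ≤ mrow := by
          have hp := posrow n ι hk1 hsm' hbd' hlast' hPk1 a
          rw [hj'a] at hp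
          rw [hmrow]
          exact hp
        have hv1 : 1 ≤ v := by omega
        have hvn : v ≤ n := by have := (hbd a).2; omega
        have hinj' := hsm'.injective
        have hc1 : tabA n ι j' (-(Pof ι (k - 1) : ℤ)) (mrow, v) = 1 := by
          rw [coeffA n ι j' hinj' hmpos hv1 hvn]
          rw [if_pos ⟨a, hj'a, by rw [hmrow]⟩, if_neg]
          · ring
          · rintro ⟨b, hb1, -⟩
            by_cases hib : b = a
            · rw [hib, hj'a] at hb1; omega
            · rw [hj', Function.update_of_ne hib] at hb1
              exact hib (hinj (by rw [hb1, hja]))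
        refine ⟨(mrow, v) :: L, ?_, ?_⟩
        · intro q hq
          rcases List.mem_cons.mp hq with rfl | hq'
          · exact ⟨hmpos, hv1, hvn⟩
          · exact hLb q hq'
        · show _ = ShatA n ι lam mrow v (List.foldr _ _ L)
          rw [← hLe, ShatA_coeff_one n ι lam mrow v _ hc1]
          have hbump := tabbump n ι hseq j' a (by rw [hj'a]; omega)
            (by rw [hj'a]; exact hvn) (-(Pof ι (k - 1) : ℤ))
          rw [hj'a] at hbump
          have hupdj : Function.update j' a (v + 1) = j := by
            rw [hj', Function.update_idem, ← hja, Function.update_eq_self]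
          rw [hupdj] at hbump
          rw [Prod.mk.injEq]
          refine ⟨rfl, ?_⟩
          rw [hmrow]
          exact hbump
      by_cases hS : (Finset.univ.filter
          (fun i : Fin k => (i : ℕ) < k - 1 ∧ (i : ℕ) + 1 < j i)).Nonempty
      · set a := (Finset.univ.filter
          (fun i : Fin k => (i : ℕ) < k - 1 ∧ (i : ℕ) + 1 < j i)).min' hS with hadef
        have haS : a ∈ Finset.univ.filter
            (fun i : Fin k => (i : ℕ) < k - 1 ∧ (i : ℕ) + 1 < j i) := by
          rw [hadef]; exact Finset.min'_mem _ hS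
        rw [Finset.mem_filter] at haS
        obtain ⟨-, ha1, ha2⟩ := haS
        have hxa : ∀ x : Fin k, x < a → j x = (x : ℕ) + 1 := by
          intro x hxlt
          have hx1 : (x : ℕ) < k - 1 := by have := Fin.lt_def.mp hxlt; omega
          by_contra hne
          have hx2 : (x : ℕ) + 1 < j x := by
            have := smlb hsm (fun i => (hbd i).1) x; omega
          have hle : a ≤ x := by
            rw [hadef]
            exact Finset.min'_le _ x (Finset.mem_filter.mpr ⟨Finset.mem_univ x, hx1, hx2⟩)
          exact absurd hxlt (not_lt.mpr hle)
        apply key a (by omega)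
        · intro x y hxy
          by_cases hx : x = a
          · by_cases hy : y = a
            · rw [hx, hy] at hxy; exact absurd hxy (lt_irrefl _)
            · rw [hx] at hxy ⊢
              rw [Function.update_self, Function.update_of_ne hy]
              have := hsm hxy; omega
          · by_cases hy : y = a
            · rw [hy] at hxy ⊢
              rw [Function.update_of_ne hx, Function.update_self]
              have h5 := hxa x hxy
              have h6 := Fin.lt_def.mp hxy
              omega
            · rw [Function.update_of_ne hx, Function.update_of_ne hy]; exact hsm hxy
        · intro i hi
          have hia : i ≠ a := by
            intro h; rw [h] at hi; omega
          rw [Function.update_of_ne hia]; exact hlast i hi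
      · have hfill : ∀ i : Fin k, (i : ℕ) < k - 1 → j i = (i : ℕ) + 1 := by
          intro i hik
          by_contra hne
          have hgt : (i : ℕ) + 1 < j i := by
            have := smlb hsm (fun i => (hbd i).1) i; omega
          exact hS ⟨i, Finset.mem_filter.mpr ⟨Finset.mem_univ i, hik, hgt⟩⟩
        have hka : k - 1 < k := by omega
        set a : Fin k := ⟨k - 1, hka⟩ with hadef
        have hav : (a : ℕ) = k - 1 := by rw [hadef]
        have hja2 : k + 2 ≤ j a := by
          have h5 := hlast a hav
          by_contra hne
          have hje : j a = k + 1 := by omega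
          apply hlam
          funext i
          by_cases hik : (i : ℕ) < k - 1
          · rw [if_pos hik]; exact hfill i hik
          · rw [if_neg hik]
            have hie : i = a := Fin.ext (by rw [hav]; have := i.isLt; omega)
            rw [hie, hje]
        apply key a (by omega)
        · intro x y hxy
          by_cases hx : x = a
          · exfalso
            have h6 := Fin.lt_def.mp hxy
            rw [hx] at h6
            have := y.isLt
            omega
          · by_cases hy : y = a
            · rw [hy] at hxy ⊢
              rw [Function.update_of_ne hx, Function.update_self]
              have h6 := Fin.lt_def.mp hxy
              have h5 := hfill x (by rw [hav] at h6; omega)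
              omega
            · rw [Function.update_of_ne hx, Function.update_of_ne hy]; exact hsm hxy
        · intro i hi
          have hie : i = a := Fin.ext (by rw [hav]; exact hi)
          rw [hie, Function.update_self]
          omega

end MainReach

/-- Type `A_n`, `ι` adapted, `1 < k < n` with `ι⁽ᵏ⁾ > ι⁽ᵏ⁺¹⁾` and `ι⁽ᵏ⁾ > ι⁽ᵏ⁻¹⁾`.
Then `Tab_{A,ι,k}[λ] ∪ {0}` is closed under all operators `Ŝ_{m,j}`, every element of
`Tab_{A,ι,k}[λ]` is obtained from `λ⁽ᵏ⁾` by a finite sequence of the `Ŝ_{m,j}`, and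
hence `Ξ_{ι,k}[λ] = Tab_{A,ι,k}[λ] ∪ {0}`. -/
theorem XiTabk_eq_TabAk (n : ℕ) (ι : ℕ → ℕ) (lam : ℕ → ℤ)
    (hseq : SeqCond n ι) (had : AdaptedA n ι) (hdom : ∀ i, 0 ≤ lam i)
    (k : ℕ) (hk1 : 1 < k) (hkn : k < n)
    (h1 : firstOcc ι (k + 1) < firstOcc ι k)
    (h2 : firstOcc ι (k - 1) < firstOcc ι k) :
    (∀ φ ∈ TabAk n ι lam k ∪ {(((0 : ℚ), (0 : LinF)) : AffF)},
      ∀ m : ℤ, ∀ jj : ℕ, 1 ≤ m → 1 ≤ jj → jj ≤ n →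
        ShatA n ι lam m jj φ ∈ TabAk n ι lam k ∪ {(((0 : ℚ), (0 : LinF)) : AffF)}) ∧
    (∀ φ ∈ TabAk n ι lam k,
      ∃ L : List (ℤ × ℕ), (∀ q ∈ L, 1 ≤ q.1 ∧ 1 ≤ q.2 ∧ q.2 ≤ n) ∧
        φ = L.foldr (fun q ψ => ShatA n ι lam q.1 q.2 ψ) (lamTabA n ι lam k)) ∧
    XiTabk n ι lam k = TabAk n ι lam k ∪ {(((0 : ℚ), (0 : LinF)) : AffF)} := by
  have hPk : Pof ι k = Pof ι (k - 1) := by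
    have h := Pof_succ ι (j := k - 1) (by omega)
    rw [show k - 1 + 1 = k by omega] at h
    rw [h, pOf_eq_zero_of_lt n ι hseq (by omega) (by omega) (by omega) (by omega) h2]
    omega
  have hPk1 : Pof ι (k + 1) = Pof ι (k - 1) + 1 := by
    rw [Pof_succ ι (by omega : 1 ≤ k),
      pOf_eq_one_of_lt n ι hseq (by omega) (by omega) (by omega) (by omega) h1, hPk]
  have hsmlam : StrictMono (fun i : Fin k => if (i : ℕ) < k - 1 then (i : ℕ) + 1 else k + 1) := by
    intro x y hxy
    have hx := Fin.lt_def.mp hxy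
    simp only
    by_cases hy2 : (y : ℕ) < k - 1
    · rw [if_pos hy2, if_pos (by omega)]; omega
    · rw [if_neg hy2]
      by_cases hx2 : (x : ℕ) < k - 1
      · rw [if_pos hx2]; omega
      · exfalso; have := x.isLt; have := y.isLt; omega
  have hbdlam : ∀ i : Fin k,
      1 ≤ (fun i : Fin k => if (i : ℕ) < k - 1 then (i : ℕ) + 1 else k + 1) i ∧
      (fun i : Fin k => if (i : ℕ) < k - 1 then (i : ℕ) + 1 else k + 1) i ≤ n + 1 := by
    intro i
    simp only
    by_cases hi : (i : ℕ) < k - 1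
    · rw [if_pos hi]; omega
    · rw [if_neg hi]; omega
  have hlastlam : ∀ i : Fin k, (i : ℕ) = k - 1 →
      k < (fun i : Fin k => if (i : ℕ) < k - 1 then (i : ℕ) + 1 else k + 1) i := by
    intro i hi
    simp only
    rw [if_neg (by omega)]
    omega
  have hlamTab : lamTabA n ι lam k ∈ TabAk n ι lam k :=
    ⟨fun i : Fin k => if (i : ℕ) < k - 1 then (i : ℕ) + 1 else k + 1,
      hsmlam, hbdlam, hlastlam, rfl⟩
  have hclosure : ∀ φ ∈ TabAk n ι lam k ∪ {(((0 : ℚ), (0 : LinF)) : AffF)},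
      ∀ m : ℤ, ∀ jj : ℕ, 1 ≤ m → 1 ≤ jj → jj ≤ n →
        ShatA n ι lam m jj φ ∈ TabAk n ι lam k ∪ {(((0 : ℚ), (0 : LinF)) : AffF)} := by
    intro φ hφ m jj hm hjj hjn
    rcases hφ with hφ | hφ
    · exact closureTab n ι lam hseq k hk1 hkn hPk hPk1 φ hφ m jj hm hjj hjn
    · rw [Set.mem_singleton_iff] at hφ
      subst hφ
      right
      rw [Set.mem_singleton_iff, ShatA_coeff_zero n ι lam m jj _ rfl]
  have hreach := reachTab n ι lam hseq k hk1 hkn hPk1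
  have hzero : (((0 : ℚ), (0 : LinF)) : AffF)
      = ShatA n ι lam 1 k (lamTabA n ι lam k) := by
    have hb0k : k - 1 < k := by omega
    have hb0v : ((⟨k - 1, hb0k⟩ : Fin k) : ℕ) = k - 1 := rfl
    have hjlb : (fun i : Fin k => if (i : ℕ) < k - 1 then (i : ℕ) + 1 else k + 1)
        (⟨k - 1, hb0k⟩ : Fin k) = k + 1 := by
      simp only
      rw [if_neg (by omega)]
    have hcN : tabA n ι (fun i : Fin k => if (i : ℕ) < k - 1 then (i : ℕ) + 1 else k + 1)
        (-(Pof ι (k - 1) : ℤ)) ((1 : ℤ), k) = -1 := by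
      rw [coeffA n ι _ hsmlam.injective (le_refl (1 : ℤ)) (by omega) (by omega)]
      rw [if_neg, if_pos]
      · ring
      · refine ⟨⟨k - 1, hb0k⟩, hjlb, ?_⟩
        omega
      · rintro ⟨a, ha, -⟩
        by_cases h : (a : ℕ) < k - 1
        · rw [if_pos h] at ha; omega
        · rw [if_neg h] at ha; omega
    rw [ShatA_coeff_neg_one n ι lam 1 k _ hcN]
    have htd := tabdown n ι hseq
      (fun i : Fin k => if (i : ℕ) < k - 1 then (i : ℕ) + 1 else k + 1)
      (⟨k - 1, hb0k⟩ : Fin k) hjlb (by omega) (by omega) (-(Pof ι (k - 1) : ℤ))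
    have hrow : -(Pof ι (k - 1) : ℤ) + (k : ℤ) - 1 - (((⟨k - 1, hb0k⟩ : Fin k) : ℕ) : ℤ)
        + (Pof ι k : ℤ) = (1 : ℤ) - 1 := by omega
    rw [hrow] at htd
    have hupd0 : Function.update
        (fun i : Fin k => if (i : ℕ) < k - 1 then (i : ℕ) + 1 else k + 1)
        (⟨k - 1, hb0k⟩ : Fin k) k = fun i : Fin k => (i : ℕ) + 1 := by
      funext i
      by_cases hi : i = (⟨k - 1, hb0k⟩ : Fin k)
      · rw [hi, Function.update_self]
        omega
      · rw [Function.update_of_ne hi]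
        have hne : (i : ℕ) ≠ k - 1 := fun h => hi (Fin.ext h)
        have := i.isLt
        rw [if_pos (by omega)]
    rw [Prod.mk.injEq]
    constructor
    · show (0 : ℚ) = (lam k : ℚ) + (if (1 : ℤ) = 1 then -(lam k : ℚ) else 0)
      rw [if_pos rfl]; ring
    · show (0 : LinF) = tabA n ι
          (fun i : Fin k => if (i : ℕ) < k - 1 then (i : ℕ) + 1 else k + 1)
          (-(Pof ι (k - 1) : ℤ)) + betaA n ι ((1 : ℤ) - 1) k
      rw [htd, hupd0, tabzero n ι hPk]
      abel
  have hXi : ∀ L : List (ℤ × ℕ), (∀ q ∈ L, 1 ≤ q.1 ∧ 1 ≤ q.2 ∧ q.2 ≤ n) →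
      L.foldr (fun q ψ => ShatA n ι lam q.1 q.2 ψ) (lamTabA n ι lam k)
        ∈ TabAk n ι lam k ∪ {(((0 : ℚ), (0 : LinF)) : AffF)} := by
    intro L
    induction L with
    | nil => exact fun _ => Or.inl hlamTab
    | cons q L ihL =>
        intro hb
        have hq := hb q List.mem_cons_self
        have hr := ihL (fun q' hq' => hb q' (List.mem_cons_of_mem _ hq'))
        exact hclosure _ hr q.1 q.2 hq.1 hq.2.1 hq.2.2
  refine ⟨hclosure, ?_, ?_⟩
  · intro φ hφ
    obtain ⟨j, hsm, hbd, hlast, rfl⟩ := hφ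
    exact hreach (∑ i, j i) j rfl hsm hbd hlast
  · ext φ
    simp only [XiTabk, Set.mem_setOf_eq]
    constructor
    · rintro ⟨L, hLb, rfl⟩
      exact hXi L hLb
    · intro hφ
      rcases hφ with hφ | hφ
      · obtain ⟨j, hsm, hbd, hlast, rfl⟩ := hφ
        exact hreach (∑ i, j i) j rfl hsm hbd hlast
      · rw [Set.mem_singleton_iff] at hφ
        subst hφ
        refine ⟨[((1 : ℤ), k)], ?_, ?_⟩
        · intro q hq
          rw [List.mem_singleton] at hq
          subst hq
          exact ⟨le_refl 1, by omega, by omega⟩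
        · exact hzero
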